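/- (Corollary 2.) Let A_j = A_i ∪ {j} with j ∉ A_i, both G_{A_i} and G_{A_j} of full row rank, and set c_i = c_j, v_i = v_j, d̃_i = −d̃_j, f_i = −f_j. Then for every θ ∈ ℝⁿ, the conditions G z_{A_i}(θ) ≤ b + Sθ and λ_{A_i}(θ) ≥ 0 hold if and only if: (i) for every row index k ∉ A_i: G_k (z_{A_j}(θ)) + (G f_i)_k (c_i + v_iᵀθ) ≤ b_k + S_k θ, and (ii) for every index k ∈ A_i: λ̃_{A_j}(θ)_k − (d̃_i)_k (c_i + v_iᵀθ) ≥ 0; moreover G_{A_i} f_i = 0, so (G f_i)_k = 0 for all k ∈ A_i. -/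

import Mathlib

open Matrix

noncomputable section
namespace MpQP

/-- Submatrix of the rows of `G` indexed by the finite index set `A`. -/
def subRows {nc p : ℕ} (G : Matrix (Fin nc) (Fin p) ℝ) (A : Finset (Fin nc)) :
    Matrix A (Fin p) ℝ := Matrix.of fun i k => G i.val k

/-- Subvector of `b` indexed by `A`. -/
def subVec {nc : ℕ} (b : Fin nc → ℝ) (A : Finset (Fin nc)) : A → ℝ := fun i => b i.val

/-- `G_A` has full row rank, i.e. the rows of `G` indexed by `A` are linearly independent. -/
def FullRowRank {nc m : ℕ} (G : Matrix (Fin nc) (Fin m) ℝ) (A : Finset (Fin nc)) : Prop :=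
  LinearIndependent ℝ (fun i : A => G i.val)

/-- The parametric dual solution `λ_A(θ) = −(G_A H⁻¹ G_Aᵀ)⁻¹ (b_A + S_A θ)`. -/
def lamOf {m n nc : ℕ} (H : Matrix (Fin m) (Fin m) ℝ) (G : Matrix (Fin nc) (Fin m) ℝ)
    (b : Fin nc → ℝ) (S : Matrix (Fin nc) (Fin n) ℝ) (A : Finset (Fin nc))
    (θ : Fin n → ℝ) : A → ℝ :=
  -((subRows G A * H⁻¹ * (subRows G A)ᵀ)⁻¹.mulVec
      (fun i => b i.val + S.mulVec θ i.val))

/-- The parametric primal solution `z_A(θ) = −H⁻¹ G_Aᵀ λ_A(θ)`. -/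
def zOf {m n nc : ℕ} (H : Matrix (Fin m) (Fin m) ℝ) (G : Matrix (Fin nc) (Fin m) ℝ)
    (b : Fin nc → ℝ) (S : Matrix (Fin nc) (Fin n) ℝ) (A : Finset (Fin nc))
    (θ : Fin n → ℝ) : Fin m → ℝ :=
  -((H⁻¹ * (subRows G A)ᵀ).mulVec (lamOf H G b S A θ))

/-- `λ̃_A(θ) ∈ ℝ^{n_c}`: the dual solution extended by zeros outside `A`. -/
def lamExt {m n nc : ℕ} (H : Matrix (Fin m) (Fin m) ℝ) (G : Matrix (Fin nc) (Fin m) ℝ)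
    (b : Fin nc → ℝ) (S : Matrix (Fin nc) (Fin n) ℝ) (A : Finset (Fin nc))
    (θ : Fin n → ℝ) : Fin nc → ℝ :=
  fun k => if h : k ∈ A then lamOf H G b S A θ ⟨k, h⟩ else 0

/-- `W = G_A H⁻¹ G_Aᵀ`. -/
def Wmat {m nc : ℕ} (H : Matrix (Fin m) (Fin m) ℝ) (G : Matrix (Fin nc) (Fin m) ℝ)
    (A : Finset (Fin nc)) : Matrix A A ℝ :=
  subRows G A * H⁻¹ * (subRows G A)ᵀ

/-- `w = G_A H⁻¹ G_jᵀ`. -/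
def wvec {m nc : ℕ} (H : Matrix (Fin m) (Fin m) ℝ) (G : Matrix (Fin nc) (Fin m) ℝ)
    (A : Finset (Fin nc)) (j : Fin nc) : A → ℝ :=
  (subRows G A * H⁻¹).mulVec (G j)

/-- `w₀ = G_j H⁻¹ G_jᵀ`. -/
def w0 {m nc : ℕ} (H : Matrix (Fin m) (Fin m) ℝ) (G : Matrix (Fin nc) (Fin m) ℝ)
    (j : Fin nc) : ℝ :=
  G j ⬝ᵥ H⁻¹.mulVec (G j)

/-- The Schur complement `C = w₀ − wᵀ W⁻¹ w`. -/
def Cval {m nc : ℕ} (H : Matrix (Fin m) (Fin m) ℝ) (G : Matrix (Fin nc) (Fin m) ℝ)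
    (A : Finset (Fin nc)) (j : Fin nc) : ℝ :=
  w0 H G j - wvec H G A j ⬝ᵥ (Wmat H G A)⁻¹.mulVec (wvec H G A j)

/-- `c_j = C⁻¹ (wᵀ W⁻¹ b_A − b_j)`. -/
def cVal {m nc : ℕ} (H : Matrix (Fin m) (Fin m) ℝ) (G : Matrix (Fin nc) (Fin m) ℝ)
    (b : Fin nc → ℝ) (A : Finset (Fin nc)) (j : Fin nc) : ℝ :=
  (Cval H G A j)⁻¹ * (wvec H G A j ⬝ᵥ (Wmat H G A)⁻¹.mulVec (subVec b A) - b j)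

/-- `v_j = C⁻¹ (S_Aᵀ W⁻¹ w − S_jᵀ)`. -/
def vVec {m n nc : ℕ} (H : Matrix (Fin m) (Fin m) ℝ) (G : Matrix (Fin nc) (Fin m) ℝ)
    (S : Matrix (Fin nc) (Fin n) ℝ) (A : Finset (Fin nc)) (j : Fin nc) : Fin n → ℝ :=
  (Cval H G A j)⁻¹ •
    ((subRows S A)ᵀ.mulVec ((Wmat H G A)⁻¹.mulVec (wvec H G A j)) - S j)

/-- `d̃_j ∈ ℝ^{n_c}`: equal to `W⁻¹ w` on `A`, to `−1` at index `j`, and `0` elsewhere. -/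
def dExt {m nc : ℕ} (H : Matrix (Fin m) (Fin m) ℝ) (G : Matrix (Fin nc) (Fin m) ℝ)
    (A : Finset (Fin nc)) (j : Fin nc) : Fin nc → ℝ :=
  fun k =>
    if h : k ∈ A then (Wmat H G A)⁻¹.mulVec (wvec H G A j) ⟨k, h⟩
    else if k = j then -1 else 0

/-- `f_j = H⁻¹ G_{A ∪ {j}}ᵀ (d̃_j restricted to A ∪ {j})`. -/
def fVec {m nc : ℕ} (H : Matrix (Fin m) (Fin m) ℝ) (G : Matrix (Fin nc) (Fin m) ℝ)
    (A : Finset (Fin nc)) (j : Fin nc) : Fin m → ℝ :=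
  (H⁻¹ * (subRows G (insert j A))ᵀ).mulVec (fun i => dExt H G A j i.val)



lemma posDef_sandwich {ι : Type*} [Fintype ι] {m : ℕ} {M : Matrix (Fin m) (Fin m) ℝ}
    (hM : M.PosDef) (B : Matrix ι (Fin m) ℝ) (hB : LinearIndependent ℝ (fun i => B i)) :
    (B * M * Bᵀ).PosDef := by
  refine Matrix.PosDef.of_dotProduct_mulVec_pos ?_ ?_
  · have := Matrix.isHermitian_mul_mul_conjTranspose B hM.1
    simpa using this
  · intro x hx
    have hy : Bᵀ *ᵥ x ≠ 0 := by
      intro h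
      apply hx
      have h2 : ∑ i, x i • B i = 0 := by
        funext k
        have := congrFun h k
        simpa [Matrix.mulVec, dotProduct, mul_comm, Finset.sum_apply] using this
      have := Fintype.linearIndependent_iff.mp hB x h2
      funext i; exact this i
    have key : x ⬝ᵥ ((B * M * Bᵀ) *ᵥ x) = (Bᵀ *ᵥ x) ⬝ᵥ (M *ᵥ (Bᵀ *ᵥ x)) := by
      rw [← Matrix.mulVec_mulVec, ← Matrix.mulVec_mulVec, Matrix.dotProduct_mulVec,
        ← Matrix.mulVec_transpose]
    have := hM.dotProduct_mulVec_pos hy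
    simpa [key] using this
variable {m n nc : ℕ} (H : Matrix (Fin m) (Fin m) ℝ) (G : Matrix (Fin nc) (Fin m) ℝ)

lemma Wmat_apply (A : Finset (Fin nc)) (k l : A) :
    Wmat H G A k l = G k.val ⬝ᵥ H⁻¹ *ᵥ G l.val := by
  simp only [Wmat, subRows, Matrix.mul_apply, dotProduct, Matrix.mulVec,
    Matrix.transpose_apply, Matrix.of_apply, Finset.sum_mul, Finset.mul_sum]
  rw [Finset.sum_comm]
  apply Finset.sum_congr rfl; intro p _
  apply Finset.sum_congr rfl; intro q _
  ring

lemma wvec_apply (A : Finset (Fin nc)) (j : Fin nc) (k : A) :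
    wvec H G A j k = G k.val ⬝ᵥ H⁻¹ *ᵥ G j := by
  simp only [wvec, subRows, Matrix.mul_apply, dotProduct, Matrix.mulVec,
    Matrix.of_apply, Finset.sum_mul, Finset.mul_sum]
  rw [Finset.sum_comm]
  apply Finset.sum_congr rfl; intro p _
  apply Finset.sum_congr rfl; intro q _
  ring

lemma mulVecW (A : Finset (Fin nc)) (v : Fin nc → ℝ) (k : A) :
    (Wmat H G A).mulVec (fun i => v i.val) k
      = ∑ l ∈ A, (G k.val ⬝ᵥ H⁻¹ *ᵥ G l) * v l := by
  show ∑ l : A, Wmat H G A k l * v l.val = _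
  simp_rw [Wmat_apply]
  exact Finset.sum_coe_sort A (fun l => (G k.val ⬝ᵥ H⁻¹ *ᵥ G l) * v l)

lemma dotz (A : Finset (Fin nc)) (v : Fin nc → ℝ) (k : Fin nc) :
    G k ⬝ᵥ (H⁻¹ * (subRows G A)ᵀ).mulVec (fun i => v i.val)
      = ∑ l ∈ A, (G k ⬝ᵥ H⁻¹ *ᵥ G l) * v l := by
  rw [← Matrix.mulVec_mulVec]
  have h1 : (subRows G A)ᵀ *ᵥ (fun i => v i.val) = ∑ l ∈ A, v l • G l := by
    funext p
    rw [Finset.sum_apply]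
    show ∑ l : A, G l.val p * v l.val = _
    rw [Finset.sum_coe_sort A (fun l => G l p * v l)]
    exact Finset.sum_congr rfl fun l _ => by simp [mul_comm]
  rw [h1]
  rw [show H⁻¹ *ᵥ (∑ l ∈ A, v l • G l) = ∑ l ∈ A, v l • (H⁻¹ *ᵥ G l) from by
    simp only [Matrix.mulVec_sum, Matrix.mulVec_smul]]
  simp only [dotProduct, Finset.sum_apply, Pi.smul_apply, smul_eq_mul, Finset.mul_sum,
    Finset.sum_mul]
  rw [Finset.sum_comm]
  apply Finset.sum_congr rfl; intro l _
  apply Finset.sum_congr rfl; intro p _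
  ring

/-- Corollary 2: for `A_i = A_j \ {j}` (with `A_j = A_i ∪ {j}`), setting
`c_i = c_j`, `v_i = v_j`, `d̃_i = −d̃_j`, `f_i = −f_j`, the feasibility
conditions `G z_{A_i}(θ) ≤ b + Sθ ∧ λ_{A_i}(θ) ≥ 0` hold iff (i) for every
`k ∉ A_i`: `G_k z_{A_j}(θ) + (G f_i)_k (c_i + v_iᵀθ) ≤ b_k + S_k θ`, and
(ii) for every `k ∈ A_i`: `λ̃_{A_j}(θ)_k − (d̃_i)_k (c_i + v_iᵀθ) ≥ 0`;
moreover `G_{A_i} f_i = 0`, so `(G f_i)_k = 0` for all `k ∈ A_i`. -/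
theorem criticalRegion_remove_constraint
    {m n nc : ℕ} (H : Matrix (Fin m) (Fin m) ℝ) (hH : H.PosDef)
    (G : Matrix (Fin nc) (Fin m) ℝ) (b : Fin nc → ℝ) (S : Matrix (Fin nc) (Fin n) ℝ)
    (Ai : Finset (Fin nc)) (j : Fin nc) (hj : j ∉ Ai)
    (hAi : FullRowRank G Ai) (hAj : FullRowRank G (insert j Ai))
    (ci : ℝ) (hci : ci = cVal H G b Ai j)
    (vi : Fin n → ℝ) (hvi : vi = vVec H G S Ai j)
    (di : Fin nc → ℝ) (hdi : di = -dExt H G Ai j)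
    (fi : Fin m → ℝ) (hfi : fi = -fVec H G Ai j)
    (θ : Fin n → ℝ) :
    ((G.mulVec (zOf H G b S Ai θ) ≤ b + S.mulVec θ ∧
        ∀ i : Ai, 0 ≤ lamOf H G b S Ai θ i) ↔
      ((∀ k, k ∉ Ai →
          G k ⬝ᵥ zOf H G b S (insert j Ai) θ +
              G.mulVec fi k * (ci + vi ⬝ᵥ θ) ≤ b k + S.mulVec θ k) ∧
        (∀ k ∈ Ai,
          0 ≤ lamExt H G b S (insert j Ai) θ k - di k * (ci + vi ⬝ᵥ θ)))) ∧
    (subRows G Ai).mulVec fi = 0 ∧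
    (∀ k ∈ Ai, G.mulVec fi k = 0) := by
  classical
  have hjAj : j ∈ insert j Ai := Finset.mem_insert_self j Ai
  -- positive definiteness and invertibility
  have hWpd : (Wmat H G Ai).PosDef := posDef_sandwich hH.inv (subRows G Ai) hAi
  have hMpd : (Wmat H G (insert j Ai)).PosDef := posDef_sandwich hH.inv (subRows G (insert j Ai)) hAj
  have hWdet : IsUnit (Wmat H G Ai).det := isUnit_iff_ne_zero.mpr hWpd.det_pos.ne'
  have hMdet : IsUnit (Wmat H G (insert j Ai)).det := isUnit_iff_ne_zero.mpr hMpd.det_pos.ne'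
  -- symmetry facts
  have hsym : ∀ a c : Fin nc, G a ⬝ᵥ H⁻¹ *ᵥ G c = G c ⬝ᵥ H⁻¹ *ᵥ G a := by
    intro a c
    have hHT : H⁻¹ᵀ = H⁻¹ := hH.inv.isHermitian.eq
    rw [Matrix.dotProduct_mulVec, ← Matrix.mulVec_transpose, hHT, dotProduct_comm]
  have hWinv_symm : ∀ (x y : Ai → ℝ),
      x ⬝ᵥ (Wmat H G Ai)⁻¹ *ᵥ y = ((Wmat H G Ai)⁻¹ *ᵥ x) ⬝ᵥ y := by
    intro x y
    have hWT : (Wmat H G Ai)ᵀ = Wmat H G Ai := hWpd.isHermitian.eq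
    rw [Matrix.dotProduct_mulVec, ← Matrix.mulVec_transpose,
      Matrix.transpose_nonsing_inv, hWT]
  -- plain-vector versions
  set u : Fin nc → ℝ := fun k => b k + S.mulVec θ k with hu
  set lam : Fin nc → ℝ := lamExt H G b S Ai θ with hlamdef
  set q : Fin nc → ℝ := dExt H G Ai j with hqdef
  have hqj : q j = -1 := by simp [hqdef, dExt, hj]
  have hlamj : lam j = 0 := by simp [hlamdef, lamExt, hj]
  have hlamAi : lamOf H G b S Ai θ = fun i : Ai => lam i.val := by
    funext i
    simp [hlamdef, lamExt, i.2]
  have hqAi : (fun i : Ai => q i.val) = (Wmat H G Ai)⁻¹ *ᵥ wvec H G Ai j := by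
    funext i
    simp [hqdef, dExt, i.2]
  -- W-row identities
  have hWlam : ∀ k (hk : k ∈ Ai),
      ∑ l ∈ Ai, (G k ⬝ᵥ H⁻¹ *ᵥ G l) * lam l = -(u k) := by
    intro k hk
    have h1 := mulVecW H G Ai lam ⟨k, hk⟩
    rw [← h1, ← hlamAi]
    have h2 : Wmat H G Ai *ᵥ lamOf H G b S Ai θ = -(fun i : Ai => u i.val) := by
      show Wmat H G Ai *ᵥ
        (-((Wmat H G Ai)⁻¹ *ᵥ (fun i : Ai => b i.val + S.mulVec θ i.val))) = _
      rw [Matrix.mulVec_neg, Matrix.mulVec_mulVec, Matrix.mul_nonsing_inv _ hWdet,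
        Matrix.one_mulVec]
    rw [h2]
    rfl
  have hWq : ∀ k (hk : k ∈ Ai),
      ∑ l ∈ Ai, (G k ⬝ᵥ H⁻¹ *ᵥ G l) * q l = G k ⬝ᵥ H⁻¹ *ᵥ G j := by
    intro k hk
    have h1 := mulVecW H G Ai q ⟨k, hk⟩
    rw [← h1, hqAi, Matrix.mulVec_mulVec, Matrix.mul_nonsing_inv _ hWdet,
      Matrix.one_mulVec, wvec_apply]
  -- row-j identities
  have hwlam : ∑ l ∈ Ai, (G j ⬝ᵥ H⁻¹ *ᵥ G l) * lam l
      = -(wvec H G Ai j ⬝ᵥ (Wmat H G Ai)⁻¹ *ᵥ (fun i : Ai => u i.val)) := by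
    rw [← Finset.sum_coe_sort Ai (fun l => (G j ⬝ᵥ H⁻¹ *ᵥ G l) * lam l)]
    have h1 : ∀ l : Ai, (G j ⬝ᵥ H⁻¹ *ᵥ G l.val) * lam l.val
        = wvec H G Ai j l * lamOf H G b S Ai θ l := by
      intro l
      rw [wvec_apply, hsym j l.val, hlamAi]
    rw [Finset.sum_congr rfl fun l _ => h1 l]
    show wvec H G Ai j ⬝ᵥ lamOf H G b S Ai θ = _
    have h2 : lamOf H G b S Ai θ
        = -((Wmat H G Ai)⁻¹ *ᵥ (fun i : Ai => u i.val)) := rfl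
    rw [h2, dotProduct_neg]
  have hwq : ∑ l ∈ Ai, (G j ⬝ᵥ H⁻¹ *ᵥ G l) * q l
      = w0 H G j - Cval H G Ai j := by
    rw [← Finset.sum_coe_sort Ai (fun l => (G j ⬝ᵥ H⁻¹ *ᵥ G l) * q l)]
    have h1 : ∀ l : Ai, (G j ⬝ᵥ H⁻¹ *ᵥ G l.val) * q l.val
        = wvec H G Ai j l * ((Wmat H G Ai)⁻¹ *ᵥ wvec H G Ai j) l := by
      intro l
      rw [wvec_apply, hsym j l.val, ← hqAi]
    rw [Finset.sum_congr rfl fun l _ => h1 l]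
    show wvec H G Ai j ⬝ᵥ (Wmat H G Ai)⁻¹ *ᵥ wvec H G Ai j = _
    rw [Cval]
    ring
  -- the M·q computation
  have hMq : (Wmat H G (insert j Ai)) *ᵥ (fun i : ↥(insert j Ai) => q i.val)
      = fun i : ↥(insert j Ai) => if i.val = j then -(Cval H G Ai j) else 0 := by
    funext k
    rw [mulVecW, Finset.sum_insert hj]
    rcases Finset.mem_insert.mp k.2 with hk | hk
    · rw [if_pos hk, hk, hqj, hwq]
      show (G j ⬝ᵥ H⁻¹ *ᵥ G j) * (-1) + _ = _
      rw [show G j ⬝ᵥ H⁻¹ *ᵥ G j = w0 H G j from rfl]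
      ring
    · have hkj : ¬ (k.val = j) := by
        intro h
        rw [h] at hk
        exact hj hk
      rw [if_neg hkj, hqj, hWq k.val hk]
      ring
  -- positivity of the Schur complement
  have hCpos : 0 < Cval H G Ai j := by
    have hd0 : (fun i : ↥(insert j Ai) => q i.val) ≠ 0 := by
      intro h
      have h2 := congrFun h ⟨j, hjAj⟩
      rw [hqj] at h2
      norm_num at h2
    have h3 := hMpd.dotProduct_mulVec_pos hd0
    rw [hMq] at h3
    have hdot : star (fun i : ↥(insert j Ai) => q i.val) ⬝ᵥ
        (fun i : ↥(insert j Ai) => if i.val = j then -(Cval H G Ai j) else 0) = Cval H G Ai j := by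
      show ∑ i : ↥(insert j Ai), q i.val * _ = _
      rw [Finset.sum_coe_sort (insert j Ai)
        (fun x => q x * if x = j then -(Cval H G Ai j) else 0)]
      rw [Finset.sum_insert hj, if_pos rfl, hqj,
        Finset.sum_eq_zero (fun x hx => by
          rw [if_neg (by rintro rfl; exact hj hx), mul_zero])]
      ring
    rw [hdot] at h3
    exact h3
  -- the scalar s
  set s : ℝ := ci + vi ⬝ᵥ θ with hs
  have hCs : Cval H G Ai j * s
      = wvec H G Ai j ⬝ᵥ (Wmat H G Ai)⁻¹ *ᵥ (fun i : Ai => u i.val) - u j := by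
    have hC : Cval H G Ai j ≠ 0 := hCpos.ne'
    have hsplit : (fun i : Ai => u i.val)
        = subVec b Ai + subRows S Ai *ᵥ θ := by
      funext i
      rfl
    rw [hsplit, Matrix.mulVec_add, dotProduct_add]
    have hv : vi ⬝ᵥ θ = (Cval H G Ai j)⁻¹ *
        (wvec H G Ai j ⬝ᵥ (Wmat H G Ai)⁻¹ *ᵥ (subRows S Ai *ᵥ θ) - S j ⬝ᵥ θ) := by
      rw [hvi, vVec, smul_dotProduct, sub_dotProduct]
      congr 2
      rw [Matrix.mulVec_transpose, ← Matrix.dotProduct_mulVec, hWinv_symm]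
    have hcℝ : ci = (Cval H G Ai j)⁻¹ *
        (wvec H G Ai j ⬝ᵥ (Wmat H G Ai)⁻¹ *ᵥ subVec b Ai - b j) := by
      rw [hci, cVal]
    have huj : u j = b j + S j ⬝ᵥ θ := rfl
    rw [hs, hv, hcℝ, huj]
    field_simp
    ring
  -- mu := the extended multiplier for (insert j Ai)
  set mu : Fin nc → ℝ := fun l => lam l - q l * s with hmudef
  have hmuj : mu j = s := by
    rw [hmudef]
    show lam j - q j * s = s
    rw [hlamj, hqj]
    ring
  have hMrow : ∀ k : ↥(insert j Ai), (Wmat H G (insert j Ai) *ᵥ (fun i : ↥(insert j Ai) => mu i.val)) k = -(u k.val) := by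
    intro k
    rw [mulVecW, Finset.sum_insert hj]
    have hsum : ∑ l ∈ Ai, (G k.val ⬝ᵥ H⁻¹ *ᵥ G l) * mu l
        = ∑ l ∈ Ai, (G k.val ⬝ᵥ H⁻¹ *ᵥ G l) * lam l
          - (∑ l ∈ Ai, (G k.val ⬝ᵥ H⁻¹ *ᵥ G l) * q l) * s := by
      rw [Finset.sum_mul, ← Finset.sum_sub_distrib]
      apply Finset.sum_congr rfl
      intro l _
      rw [hmudef]
      ring
    rw [hsum, hmuj]
    rcases Finset.mem_insert.mp k.2 with hk | hk
    · rw [hk, hwlam, hwq]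
      rw [show G j ⬝ᵥ H⁻¹ *ᵥ G j = w0 H G j from rfl]
      linear_combination hCs
    · rw [hWlam k.val hk, hWq k.val hk]
      ring
  have hlamAj : lamOf H G b S (insert j Ai) θ = fun i : ↥(insert j Ai) => mu i.val := by
    have h1 : Wmat H G (insert j Ai) *ᵥ (fun i : ↥(insert j Ai) => mu i.val) = -(fun i : ↥(insert j Ai) => u i.val) := by
      funext k
      rw [hMrow k]
      rfl
    show -((Wmat H G (insert j Ai))⁻¹ *ᵥ (fun i : ↥(insert j Ai) => b i.val + S.mulVec θ i.val)) = _
    have h2 : (fun i : ↥(insert j Ai) => b i.val + S.mulVec θ i.val)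
        = Wmat H G (insert j Ai) *ᵥ (-(fun i : ↥(insert j Ai) => mu i.val)) := by
      rw [Matrix.mulVec_neg, h1, neg_neg]
    rw [h2, Matrix.mulVec_mulVec, Matrix.nonsing_inv_mul _ hMdet, Matrix.one_mulVec,
      neg_neg]
  -- dot products with rows of G
  have hGzAi : ∀ k, G.mulVec (zOf H G b S Ai θ) k
      = -∑ l ∈ Ai, (G k ⬝ᵥ H⁻¹ *ᵥ G l) * lam l := by
    intro k
    show G k ⬝ᵥ zOf H G b S Ai θ = _
    rw [zOf, hlamAi, dotProduct_neg, dotz]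
  have hGzAj : ∀ k, G k ⬝ᵥ zOf H G b S (insert j Ai) θ
      = -∑ l ∈ (insert j Ai), (G k ⬝ᵥ H⁻¹ *ᵥ G l) * mu l := by
    intro k
    rw [zOf, hlamAj, dotProduct_neg, dotz]
  have hGfi : ∀ k, G.mulVec fi k = -∑ l ∈ (insert j Ai), (G k ⬝ᵥ H⁻¹ *ᵥ G l) * q l := by
    intro k
    show G k ⬝ᵥ fi = _
    rw [hfi, fVec, dotProduct_neg, dotz]
  have hrowq0 : ∀ k ∈ Ai, ∑ l ∈ (insert j Ai), (G k ⬝ᵥ H⁻¹ *ᵥ G l) * q l = 0 := by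
    intro k hk
    rw [Finset.sum_insert hj, hqj, hWq k hk]
    ring
  have hGfi0 : ∀ k ∈ Ai, G.mulVec fi k = 0 := by
    intro k hk
    rw [hGfi, hrowq0 k hk, neg_zero]
  -- claim Z
  have hZ : ∀ k, G k ⬝ᵥ zOf H G b S (insert j Ai) θ + G.mulVec fi k * s
      = G.mulVec (zOf H G b S Ai θ) k := by
    intro k
    rw [hGzAj, hGfi, hGzAi]
    have h1 : ∑ l ∈ (insert j Ai), (G k ⬝ᵥ H⁻¹ *ᵥ G l) * lam l
        = ∑ l ∈ Ai, (G k ⬝ᵥ H⁻¹ *ᵥ G l) * lam l := by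
      rw [Finset.sum_insert hj, hlamj]
      ring
    have h2 : ∑ l ∈ (insert j Ai), (G k ⬝ᵥ H⁻¹ *ᵥ G l) * mu l
        + (∑ l ∈ (insert j Ai), (G k ⬝ᵥ H⁻¹ *ᵥ G l) * q l) * s
        = ∑ l ∈ (insert j Ai), (G k ⬝ᵥ H⁻¹ *ᵥ G l) * lam l := by
      rw [Finset.sum_mul, ← Finset.sum_add_distrib]
      apply Finset.sum_congr rfl
      intro l _
      rw [hmudef]
      ring
    linear_combination -h2 - h1
  -- claim E : active rows are tight
  have hE : ∀ k ∈ Ai, G.mulVec (zOf H G b S Ai θ) k = u k := by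
    intro k hk
    rw [hGzAi, hWlam k hk, neg_neg]
  -- claim L
  have hL : ∀ k (hk : k ∈ Ai),
      lamExt H G b S (insert j Ai) θ k - di k * s = lam k := by
    intro k hk
    have hkj : k ∈ (insert j Ai) := Finset.mem_insert_of_mem hk
    have h1 : lamExt H G b S (insert j Ai) θ k = mu k := by
      rw [lamExt, dif_pos hkj, hlamAj]
    have h2 : di k = -q k := by rw [hdi]; rfl
    rw [h1, h2, hmudef]
    ring
  refine ⟨?_, ?_, hGfi0⟩
  · constructor
    · rintro ⟨h1, h2⟩
      constructor
      · intro k hk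
        rw [hZ k]
        exact h1 k
      · intro k hk
        rw [hL k hk]
        have h3 : lam k = lamOf H G b S Ai θ ⟨k, hk⟩ := by
          rw [hlamdef, lamExt, dif_pos hk]
        rw [h3]
        exact h2 ⟨k, hk⟩
    · rintro ⟨h1, h2⟩
      constructor
      · rw [Pi.le_def]
        intro k
        by_cases hk : k ∈ Ai
        · exact le_of_eq (hE k hk)
        · rw [← hZ k]
          exact h1 k hk
      · intro i
        have h3 := h2 i.val i.2
        rw [hL i.val i.2] at h3
        have h4 : lam i.val = lamOf H G b S Ai θ i := by
          rw [hlamAi]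
        rw [h4] at h3
        exact h3
  · funext i
    have h := hGfi0 i.val i.2
    exact h

end MpQP
end
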